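/- arXiv:1707.01392 — 16 statements merged into one kernel-verified Lean document; each statement's English description precedes it below -/
import Mathlib

section
/- In the simplified three-player full-street Kuhn poker game with pot size P ≥ 2, no equilibrium strategy profile has b₁ = 1. (If b₁ = 1, then Player 2's best response forces c₂ = 1 and Player 3's best response forces d₃ = 1, so c₂ + d₃ = 2 > (2P−4)/(P+1), making b₁ = 1 suboptimal for Player 1.) -/
/-- A strategy profile for simplified three-player full-street Kuhn poker:
eleven betting/calling frequencies. -/
structure Profile where
  a1 : ℝ
  b1 : ℝ
  c1 : ℝ
  d1 : ℝ
  a2 : ℝ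
  b2 : ℝ
  c2 : ℝ
  d2 : ℝ
  b3 : ℝ
  c3 : ℝ
  d3 : ℝ

/-- All eleven frequencies lie in [0,1]. -/
def Profile.valid (s : Profile) : Prop :=
  s.a1 ∈ Set.Icc (0:ℝ) 1 ∧ s.b1 ∈ Set.Icc (0:ℝ) 1 ∧ s.c1 ∈ Set.Icc (0:ℝ) 1 ∧
  s.d1 ∈ Set.Icc (0:ℝ) 1 ∧ s.a2 ∈ Set.Icc (0:ℝ) 1 ∧ s.b2 ∈ Set.Icc (0:ℝ) 1 ∧
  s.c2 ∈ Set.Icc (0:ℝ) 1 ∧ s.d2 ∈ Set.Icc (0:ℝ) 1 ∧ s.b3 ∈ Set.Icc (0:ℝ) 1 ∧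
  s.c3 ∈ Set.Icc (0:ℝ) 1 ∧ s.d3 ∈ Set.Icc (0:ℝ) 1

/-- Player 1's expected profit (so that 24 E₁ equals the stated polynomial). -/
noncomputable def E1 (P : ℝ) (s : Profile) : ℝ :=
  (1 / 24) *
    ((-2 * s.b2 + 2 * s.c2 - 2 * s.b3 + 2 * s.d3 - s.b2 * s.c3) * s.a1
      + (2 * P - 4 - (P + 1) * (s.c2 + s.d3)) * s.b1
      + (s.b2 - 2 + (P + s.a2) * s.b3) * s.c1
      + ((P + 1) * s.b2 - 2 * s.a2) * s.d1
      + (2 - P) * s.b3 + (2 + s.c3 - P) * s.b2)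

/-- Player 2's expected profit (so that 24 E₂ equals the stated polynomial). -/
noncomputable def E2 (P : ℝ) (s : Profile) : ℝ :=
  (1 / 24) *
    ((2 * s.d1 + 2 * s.c3 - 2 * s.b3 - s.c1 * s.b3 - s.b1 * s.c3) * s.a2
      + (2 * P - 4 + 2 * s.a1 - (P + 1) * (s.c3 + s.d1)) * s.b2
      + (P * s.b1 - 2 * s.a1) * s.c2
      + ((P + 1) * s.b3 - 2 + s.b1) * s.d2
      + (2 - P + s.c1) * s.b3 + (2 - P) * s.b1)

/-- Player 3's expected profit (so that 24 E₃ equals the stated polynomial). -/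
noncomputable def E3 (P : ℝ) (s : Profile) : ℝ :=
  (1 / 24) *
    ((2 * P - 4 + 2 * s.a1 + 2 * s.a2 - (P + 1) * (s.c1 + s.d2)) * s.b3
      + ((P + s.a1) * s.b2 - (2 - s.b1) * s.a2) * s.c3
      + ((P + 1) * s.b1 - 2 * s.a1) * s.d3
      + (2 - P - s.c1) * s.b2 + 2 * s.c1
      + (2 - P + s.c2 - s.d2) * s.b1 + 2 * s.d2)

/-- A profile is an equilibrium if no player can increase her own expected
profit by unilaterally changing her own frequencies within [0,1]. -/
def IsEquilibrium (P : ℝ) (s : Profile) : Prop :=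
  (∀ a b c d : ℝ, a ∈ Set.Icc (0:ℝ) 1 → b ∈ Set.Icc (0:ℝ) 1 →
      c ∈ Set.Icc (0:ℝ) 1 → d ∈ Set.Icc (0:ℝ) 1 →
      E1 P { s with a1 := a, b1 := b, c1 := c, d1 := d } ≤ E1 P s) ∧
  (∀ a b c d : ℝ, a ∈ Set.Icc (0:ℝ) 1 → b ∈ Set.Icc (0:ℝ) 1 →
      c ∈ Set.Icc (0:ℝ) 1 → d ∈ Set.Icc (0:ℝ) 1 →
      E2 P { s with a2 := a, b2 := b, c2 := c, d2 := d } ≤ E2 P s) ∧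
  (∀ b c d : ℝ, b ∈ Set.Icc (0:ℝ) 1 → c ∈ Set.Icc (0:ℝ) 1 →
      d ∈ Set.Icc (0:ℝ) 1 →
      E3 P { s with b3 := b, c3 := c, d3 := d } ≤ E3 P s)

theorem no_equilibrium_with_b1_eq_one (P : ℝ) (s : Profile)
    (hP : 2 ≤ P) (hval : s.valid) (heq : IsEquilibrium P s) :
    s.b1 ≠ 1 := by
  intro hb1
  obtain ⟨ha1, hb1', hc1, hd1, ha2, hb2, hc2, hd2, hb3, hc3, hd3⟩ := hval
  obtain ⟨h1, h2, h3⟩ := heq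
  -- Player 3 deviation d3 := 1
  have H3 := h3 s.b3 s.c3 1 hb3 hc3 (by constructor <;> norm_num)
  -- Player 2 deviation c2 := 1
  have H2 := h2 s.a2 s.b2 1 s.d2 ha2 hb2 (by constructor <;> norm_num) hd2
  -- Player 1 deviation b1 := 0
  have H1 := h1 s.a1 0 s.c1 s.d1 ha1 (by constructor <;> norm_num) hc1 hd1
  simp only [E1, E2, E3] at H1 H2 H3
  obtain ⟨ha10, ha11⟩ := ha1
  obtain ⟨hc20, hc21⟩ := hc2
  obtain ⟨hd30, hd31⟩ := hd3
  -- from H3 : d3 = 1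
  have hd3eq : s.d3 = 1 := by nlinarith [mul_nonneg (sub_nonneg.mpr ha11) (sub_nonneg.mpr hd31)]
  nlinarith [mul_nonneg (sub_nonneg.mpr ha11) (sub_nonneg.mpr hc21),
    mul_nonneg (sub_nonneg.mpr hP) (sub_nonneg.mpr hc21), hc20, ha10]
end

section
/- In the simplified three-player full-street Kuhn poker game with pot size P ≥ 2, no equilibrium strategy profile has b₂ = 1. (If b₂ = 1, then Player 3's best response forces c₃ = 1 and Player 1's best response forces d₁ = 1, so c₃ + d₁ = 2 > (2P−4+2a₁)/(P+1), making b₂ = 1 suboptimal for Player 2.) -/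
theorem no_equilibrium_with_b2_eq_one (P : ℝ) (s : Profile)
    (hP : 2 ≤ P) (hval : s.valid) (heq : IsEquilibrium P s) :
    s.b2 ≠ 1 := by
  intro hb2
  obtain ⟨ha1, hb1, hc1, hd1, ha2, hb2v, hc2, hd2, hb3, hc3, hd3⟩ := hval
  obtain ⟨hE1, hE2, hE3⟩ := heq
  have h01 : (0:ℝ) ∈ Set.Icc (0:ℝ) 1 := by constructor <;> norm_num
  have h11 : (1:ℝ) ∈ Set.Icc (0:ℝ) 1 := by constructor <;> norm_num
  -- Player 2: b2 = 1 optimal vs b2 = 0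
  have h1 : 0 ≤ 2*P - 4 + 2*s.a1 - (P+1)*(s.c3 + s.d1) := by
    have h := hE2 s.a2 0 s.c2 s.d2 ha2 h01 hc2 hd2
    simp only [E2] at h
    nlinarith [h]
  -- Player 1: d1 forced to 1
  have h2 : s.d1 = 1 := by
    have h := hE1 s.a1 s.b1 s.c1 1 ha1 hb1 hc1 h11
    simp only [E1] at h
    have hcoef : 0 < (P+1) * s.b2 - 2 * s.a2 := by
      rw [hb2]; nlinarith [ha2.2]
    nlinarith [hd1.2, h, mul_le_mul_of_nonneg_left (sub_nonneg.mpr hd1.2) (le_of_lt hcoef)]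
  -- Player 3: c3 coefficient
  have h3 : ((P + s.a1) * s.b2 - (2 - s.b1) * s.a2) * (1 - s.c3) ≤ 0 := by
    have h := hE3 s.b3 1 s.d3 hb3 h11 hd3
    simp only [E3] at h
    nlinarith [h]
  have hcoef : 0 ≤ (P + s.a1) * s.b2 - (2 - s.b1) * s.a2 := by
    rw [hb2]; nlinarith [ha1.1, ha2.2, hb1.1, ha2.1, hb1.2]
  have hc3le : s.c3 ≤ 1 := hc3.2
  have hz : ((P + s.a1) * s.b2 - (2 - s.b1) * s.a2) * (1 - s.c3) = 0 :=
    le_antisymm h3 (mul_nonneg hcoef (by linarith))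
  rcases mul_eq_zero.mp hz with hz | hz
  · -- coefficient zero: P + a1 = (2-b1)*a2 <= 2
    rw [hb2] at hz
    have : P + s.a1 ≤ 2 := by nlinarith [ha2.2, hb1.1, ha2.1, hb1.2]
    nlinarith [hc3.1, h1, h2, ha1.2]
  · -- c3 = 1
    have hc3e : s.c3 = 1 := by linarith
    rw [h2, hc3e] at h1
    nlinarith [ha1.2]
end

section
/- In the simplified three-player full-street Kuhn poker game with pot size P ≥ 2, every equilibrium strategy profile satisfies either (a₁ = 0 and b₁ = 0) or (a₁ > 0 and b₁ > 0); that is, Player 1's value bets with A must be balanced by bluffs with Q and vice versa. -/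
set_option maxHeartbeats 1000000 in
theorem equilibrium_player1_balanced (P : ℝ) (s : Profile)
    (hP : 2 ≤ P) (hval : s.valid) (heq : IsEquilibrium P s) :
    (s.a1 = 0 ∧ s.b1 = 0) ∨ (0 < s.a1 ∧ 0 < s.b1) := by
  obtain ⟨ha1, hb1, hc1, hd1, ha2, hb2, hc2, hd2, hb3, hc3, hd3⟩ := hval
  obtain ⟨h1, h2, h3⟩ := heq
  have h01 : (0:ℝ) ∈ Set.Icc (0:ℝ) 1 := by norm_num
  have h11 : (1:ℝ) ∈ Set.Icc (0:ℝ) 1 := by norm_num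
  -- Player 1 conditions
  have hA : 0 ≤ (-2*s.b2+2*s.c2-2*s.b3+2*s.d3-s.b2*s.c3) * s.a1 := by
    have h := h1 0 s.b1 s.c1 s.d1 h01 hb1 hc1 hd1
    simp only [E1] at h; ring_nf at h ⊢; linarith [h]
  have hB1lo : 0 ≤ (2*P-4-(P+1)*(s.c2+s.d3)) * s.b1 := by
    have h := h1 s.a1 0 s.c1 s.d1 ha1 h01 hc1 hd1
    simp only [E1] at h; ring_nf at h ⊢; linarith [h]
  have hB1hi : (2*P-4-(P+1)*(s.c2+s.d3)) ≤ (2*P-4-(P+1)*(s.c2+s.d3)) * s.b1 := by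
    have h := h1 s.a1 1 s.c1 s.d1 ha1 h11 hc1 hd1
    simp only [E1] at h; ring_nf at h ⊢; linarith [h]
  have hC1 : 0 ≤ (s.b2-2+(P+s.a2)*s.b3) * s.c1 := by
    have h := h1 s.a1 s.b1 0 s.d1 ha1 hb1 h01 hd1
    simp only [E1] at h; ring_nf at h ⊢; linarith [h]
  have hD1 : 0 ≤ ((P+1)*s.b2-2*s.a2) * s.d1 := by
    have h := h1 s.a1 s.b1 s.c1 0 ha1 hb1 hc1 h01
    simp only [E1] at h; ring_nf at h ⊢; linarith [h]
  -- Player 2 conditions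
  have hB2 : (2*P-4+2*s.a1-(P+1)*(s.c3+s.d1)) ≤ (2*P-4+2*s.a1-(P+1)*(s.c3+s.d1)) * s.b2 := by
    have h := h2 s.a2 1 s.c2 s.d2 ha2 h11 hc2 hd2
    simp only [E2] at h; ring_nf at h ⊢; linarith [h]
  have hC2lo : 0 ≤ (P*s.b1-2*s.a1) * s.c2 := by
    have h := h2 s.a2 s.b2 0 s.d2 ha2 hb2 h01 hd2
    simp only [E2] at h; ring_nf at h ⊢; linarith [h]
  have hC2hi : (P*s.b1-2*s.a1) ≤ (P*s.b1-2*s.a1) * s.c2 := by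
    have h := h2 s.a2 s.b2 1 s.d2 ha2 hb2 h11 hd2
    simp only [E2] at h; ring_nf at h ⊢; linarith [h]
  have hD2 : 0 ≤ ((P+1)*s.b3-2+s.b1) * s.d2 := by
    have h := h2 s.a2 s.b2 s.c2 0 ha2 hb2 hc2 h01
    simp only [E2] at h; ring_nf at h ⊢; linarith [h]
  -- Player 3 conditions
  have hB3 : (2*P-4+2*s.a1+2*s.a2-(P+1)*(s.c1+s.d2)) ≤
      (2*P-4+2*s.a1+2*s.a2-(P+1)*(s.c1+s.d2)) * s.b3 := by
    have h := h3 1 s.c3 s.d3 h11 hc3 hd3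
    simp only [E3] at h; ring_nf at h ⊢; linarith [h]
  have hC3 : 0 ≤ ((P+s.a1)*s.b2-(2-s.b1)*s.a2) * s.c3 := by
    have h := h3 s.b3 0 s.d3 hb3 h01 hd3
    simp only [E3] at h; ring_nf at h ⊢; linarith [h]
  have hD3lo : 0 ≤ ((P+1)*s.b1-2*s.a1) * s.d3 := by
    have h := h3 s.b3 s.c3 0 hb3 hc3 h01
    simp only [E3] at h; ring_nf at h ⊢; linarith [h]
  have hD3hi : ((P+1)*s.b1-2*s.a1) ≤ ((P+1)*s.b1-2*s.a1) * s.d3 := by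
    have h := h3 s.b3 s.c3 1 hb3 hc3 h11
    simp only [E3] at h; ring_nf at h ⊢; linarith [h]
  -- case analysis
  rcases eq_or_lt_of_le ha1.1 with ha0 | hapos
  · rcases eq_or_lt_of_le hb1.1 with hb0 | hbpos
    · exact Or.inl ⟨ha0.symm, hb0.symm⟩
    · -- a1 = 0, b1 > 0 : contradiction
      exfalso
      have hX : 0 < P * s.b1 - 2 * s.a1 := by nlinarith
      have hc2e : s.c2 = 1 := le_antisymm hc2.2 (by nlinarith [hC2hi])
      have hY : 0 < (P + 1) * s.b1 - 2 * s.a1 := by nlinarith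
      have hd3e : s.d3 = 1 := le_antisymm hd3.2 (by nlinarith [hD3lo, hD3hi])
      rw [hc2e, hd3e] at hB1lo
      nlinarith [hB1lo]
  · rcases eq_or_lt_of_le hb1.1 with hb0 | hbpos
    · exfalso
      have hb0' : s.b1 = 0 := hb0.symm
      rw [hb0'] at hC2lo hD3lo hC3 hD2
      have hc2e : s.c2 = 0 := le_antisymm (by nlinarith [hC2lo, hc2.1]) hc2.1
      have hd3e : s.d3 = 0 := le_antisymm (by nlinarith [hD3lo, hd3.1]) hd3.1
      have hAge : 0 ≤ -2*s.b2+2*s.c2-2*s.b3+2*s.d3-s.b2*s.c3 := by nlinarith [hA]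
      rw [hc2e, hd3e] at hAge
      have hb2e : s.b2 = 0 :=
        le_antisymm (by linarith [hAge, hb3.1, mul_nonneg hb2.1 hc3.1]) hb2.1
      have hb3e : s.b3 = 0 :=
        le_antisymm (by linarith [hAge, hb2.1, mul_nonneg hb2.1 hc3.1]) hb3.1
      -- 2a1 ≤ (P+1)(c3+d1) from player 2's b2 condition
      have hkey2 : 2*s.a1 ≤ (P+1)*(s.c3+s.d1) := by
        rw [hb2e] at hB2; linarith [hB2, hP]
      rcases eq_or_lt_of_le ha2.1 with ha20 | ha2pos
      · -- a2 = 0 : use player 3's b3 condition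
        have hkey3 : 2*s.a1 ≤ (P+1)*(s.c1+s.d2) := by
          rw [hb3e, ← ha20] at hB3; linarith [hB3, hP]
        have hc1e : s.c1 = 0 := by
          rw [hb2e, hb3e] at hC1
          exact le_antisymm (by linarith [hC1]) hc1.1
        have hd2e : s.d2 = 0 := by
          rw [hb3e] at hD2
          exact le_antisymm (by linarith [hD2]) hd2.1
        rw [hc1e, hd2e] at hkey3; linarith [hkey3, hapos]
      · -- a2 > 0 : c3 = d1 = 0
        have hc3e : s.c3 = 0 := by
          rw [hb2e] at hC3
          refine le_antisymm (by_contra fun hcon => ?_) hc3.1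
          push_neg at hcon
          linarith [hC3, mul_pos ha2pos hcon]
        have hd1e : s.d1 = 0 := by
          rw [hb2e] at hD1
          refine le_antisymm (by_contra fun hcon => ?_) hd1.1
          push_neg at hcon
          linarith [hD1, mul_pos ha2pos hcon]
        rw [hc3e, hd1e] at hkey2; linarith [hkey2, hapos]
    · exact Or.inr ⟨hapos, hbpos⟩
end

section
/- In the simplified three-player full-street Kuhn poker game with pot size P ≥ 2, every equilibrium strategy profile satisfies either (a₂ = 0 and b₂ = 0) or (a₂ > 0 and b₂ > 0); that is, Player 2's value bets with A must be balanced by bluffs with Q and vice versa. -/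
theorem equilibrium_player2_balanced (P : ℝ) (s : Profile)
    (hP : 2 ≤ P) (hval : s.valid) (heq : IsEquilibrium P s) :
    (s.a2 = 0 ∧ s.b2 = 0) ∨ (0 < s.a2 ∧ 0 < s.b2) := by
  obtain ⟨ha1, hb1, hc1, hd1, ha2, hb2, hc2, hd2, hb3, hc3, hd3⟩ := hval
  obtain ⟨h1, h2, h3⟩ := heq
  have i01 : (0:ℝ) ∈ Set.Icc (0:ℝ) 1 := ⟨le_refl 0, zero_le_one⟩
  have i11 : (1:ℝ) ∈ Set.Icc (0:ℝ) 1 := ⟨zero_le_one, le_refl 1⟩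
  rcases lt_or_eq_of_le ha2.1 with ha2p | ha2z
  · rcases lt_or_eq_of_le hb2.1 with hb2p | hb2z
    · exact Or.inr ⟨ha2p, hb2p⟩
    -- a2 > 0, b2 = 0 : contradiction
    · exfalso
      have hb2z : s.b2 = 0 := hb2z.symm
      -- d1 = 0
      have hd1z : s.d1 = 0 := by
        have h := h1 s.a1 s.b1 s.c1 0 ha1 hb1 hc1 i01
        simp only [E1] at h
        rw [hb2z] at h
        nlinarith [hd1.1, ha2p]
      -- c3 = 0
      have hc3z : s.c3 = 0 := by
        have h := h3 s.b3 0 s.d3 hb3 i01 hd3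
        simp only [E3] at h
        rw [hb2z] at h
        nlinarith [hc3.1, hb1.2, ha2p,
          mul_nonneg (mul_nonneg ha2.1 hc3.1) (sub_nonneg.2 hb1.2),
          mul_nonneg ha2.1 hc3.1]
      -- A ≥ 0 from a2 > 0, hence b3 = 0
      have hb3z : s.b3 = 0 := by
        have h := h2 0 s.b2 s.c2 s.d2 i01 hb2 hc2 hd2
        simp only [E2] at h
        rw [hd1z, hc3z] at h
        nlinarith [hb3.1, hc1.1, ha2p, mul_nonneg hc1.1 hb3.1]
      -- c1 = 0
      have hc1z : s.c1 = 0 := by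
        have h := h1 s.a1 s.b1 0 s.d1 ha1 hb1 i01 hd1
        simp only [E1] at h
        rw [hb2z, hb3z] at h
        nlinarith [hc1.1]
      -- d2 = 0
      have hd2z : s.d2 = 0 := by
        have h := h2 s.a2 s.b2 s.c2 0 ha2 hb2 hc2 i01
        simp only [E2] at h
        rw [hb3z] at h
        nlinarith [hd2.1, hb1.2]
      -- b3 coefficient must be ≤ 0, but it is positive
      have h := h3 1 s.c3 s.d3 i11 hc3 hd3
      simp only [E3] at h
      rw [hb3z, hc1z, hd2z] at h
      nlinarith [ha1.1, ha2p]
  · rcases lt_or_eq_of_le hb2.1 with hb2p | hb2z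
    -- a2 = 0, b2 > 0 : contradiction
    · exfalso
      have ha2z : s.a2 = 0 := ha2z.symm
      -- d1 = 1
      have hd1o : s.d1 = 1 := by
        by_contra hd
        have hd' : s.d1 < 1 := lt_of_le_of_ne hd1.2 hd
        have h := h1 s.a1 s.b1 s.c1 1 ha1 hb1 hc1 i11
        simp only [E1] at h
        rw [ha2z] at h
        nlinarith [mul_pos hb2p (sub_pos.2 hd'), hP]
      -- c3 = 1
      have hc3o : s.c3 = 1 := by
        by_contra hc
        have hc' : s.c3 < 1 := lt_of_le_of_ne hc3.2 hc
        have h := h3 s.b3 1 s.d3 hb3 i11 hd3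
        simp only [E3] at h
        rw [ha2z] at h
        nlinarith [mul_pos hb2p (sub_pos.2 hc'), ha1.1, hP,
          mul_nonneg (mul_nonneg ha1.1 hb2.1) (sub_nonneg.2 hc3.2)]
      -- B ≥ 0 contradiction
      have h := h2 s.a2 0 s.c2 s.d2 ha2 i01 hc2 hd2
      simp only [E2] at h
      rw [hd1o, hc3o] at h
      nlinarith [hb2p, mul_nonneg (sub_nonneg.2 ha1.2) hb2.1]
    · exact Or.inl ⟨ha2z.symm, hb2z.symm⟩
end

section
/- (Solution 1a) In the simplified three-player full-street Kuhn poker game with pot size P = 2, every strategy profile with a₁ = b₁ = a₂ = b₂ = 0, 0 ≤ b₃ ≤ 2/3, c₁ = d₂ = 0, c₃ + d₁ ≤ b₃ and c₂ + d₃ ≤ b₃ is an equilibrium. -/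
theorem solution_1a_is_equilibrium (P : ℝ) (s : Profile)
    (hP : P = 2) (hval : s.valid)
    (ha1 : s.a1 = 0) (hb1 : s.b1 = 0) (ha2 : s.a2 = 0) (hb2 : s.b2 = 0)
    (hb3l : 0 ≤ s.b3) (hb3u : s.b3 ≤ 2 / 3)
    (hc1 : s.c1 = 0) (hd2 : s.d2 = 0)
    (h31 : s.c3 + s.d1 ≤ s.b3) (h23 : s.c2 + s.d3 ≤ s.b3) :
    IsEquilibrium P s := by
  obtain ⟨_, _, _, hd1, _, _, hc2, _, hb3, hc3, hd3⟩ := hval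
  refine ⟨?_, ?_, ?_⟩
  · rintro a b c d ⟨ha0, ha1'⟩ ⟨hb0, hb1'⟩ ⟨hc0, hc1'⟩ ⟨hd0, hd1'⟩
    simp only [E1, hP, ha1, hb1, ha2, hb2, hc1, hd2]
    nlinarith [mul_nonneg ha0 (sub_nonneg.2 h23), mul_nonneg hb0 hc2.1,
      mul_nonneg hb0 hd3.1, mul_nonneg hc0 (sub_nonneg.2 hb3.2)]
  · rintro a b c d ⟨ha0, ha1'⟩ ⟨hb0, hb1'⟩ ⟨hc0, hc1'⟩ ⟨hd0, hd1'⟩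
    simp only [E2, hP, ha1, hb1, ha2, hb2, hc1, hd2]
    nlinarith [mul_nonneg ha0 (sub_nonneg.2 h31), mul_nonneg hb0 hc3.1,
      mul_nonneg hb0 hd1.1, mul_nonneg hd0 (by linarith : (0:ℝ) ≤ 2 - 3 * s.b3)]
  · rintro b c d ⟨hb0, hb1'⟩ ⟨hc0, hc1'⟩ ⟨hd0, hd1'⟩
    simp only [E3, hP, ha1, hb1, ha2, hb2, hc1, hd2]
    nlinarith []
end

section
/- (Solution 1) In the simplified three-player full-street Kuhn poker game with pot size 2 ≤ P ≤ 3, every strategy profile with a₁ = b₁ = a₂ = b₂ = 0, b₃ = 2/(P+1), c₁ = 0, d₂ = (2P−4)/(P+1), (2P−4)/(P+1) ≤ c₃ + d₁ ≤ 2/(P+1) and (2P−4)/(P+1) ≤ c₂ + d₃ ≤ 2/(P+1) is an equilibrium. -/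
theorem solution_1_is_equilibrium (P : ℝ) (s : Profile)
    (hP2 : 2 ≤ P) (hP3 : P ≤ 3) (hval : s.valid)
    (ha1 : s.a1 = 0) (hb1 : s.b1 = 0) (ha2 : s.a2 = 0) (hb2 : s.b2 = 0)
    (hb3 : s.b3 = 2 / (P + 1)) (hc1 : s.c1 = 0) (hd2 : s.d2 = (2 * P - 4) / (P + 1))
    (h31l : (2 * P - 4) / (P + 1) ≤ s.c3 + s.d1) (h31u : s.c3 + s.d1 ≤ 2 / (P + 1))
    (h23l : (2 * P - 4) / (P + 1) ≤ s.c2 + s.d3) (h23u : s.c2 + s.d3 ≤ 2 / (P + 1)) :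
    IsEquilibrium P s := by
  have hP1 : (0:ℝ) < P + 1 := by linarith
  have hb3eq : (P + 1) * s.b3 = 2 := by rw [hb3]; field_simp
  have hd2eq : (P + 1) * s.d2 = 2 * P - 4 := by rw [hd2]; field_simp
  have h31l' : 2 * P - 4 ≤ (P + 1) * (s.c3 + s.d1) := by
    rw [div_le_iff₀ hP1] at h31l; linarith
  have h31u' : (P + 1) * (s.c3 + s.d1) ≤ 2 := by
    rw [le_div_iff₀ hP1] at h31u; linarith
  have h23l' : 2 * P - 4 ≤ (P + 1) * (s.c2 + s.d3) := by
    rw [div_le_iff₀ hP1] at h23l; linarith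
  have h23u' : (P + 1) * (s.c2 + s.d3) ≤ 2 := by
    rw [le_div_iff₀ hP1] at h23u; linarith
  have hcb2 : s.c2 + s.d3 ≤ s.b3 := by nlinarith
  have hcb3 : s.c3 + s.d1 ≤ s.b3 := by nlinarith
  refine ⟨?_, ?_, ?_⟩
  · intro a b c d ha hb hc hd
    simp only [Set.mem_Icc] at ha hb hc hd
    have h1 : a * (2 * (s.c2 + s.d3) - 2 * s.b3) ≤ 0 :=
      mul_nonpos_of_nonneg_of_nonpos ha.1 (by linarith)
    have h2 : b * (2 * P - 4 - (P + 1) * (s.c2 + s.d3)) ≤ 0 :=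
      mul_nonpos_of_nonneg_of_nonpos hb.1 (by linarith)
    have h3 : c * (P * s.b3 - 2) ≤ 0 :=
      mul_nonpos_of_nonneg_of_nonpos hc.1 (by nlinarith)
    simp only [E1, ha1, hb1, hc1, ha2, hb2]
    linarith [h1, h2, h3]
  · intro a b c d ha hb hc hd
    simp only [Set.mem_Icc] at ha hb hc hd
    have h1 : a * (2 * (s.c3 + s.d1) - 2 * s.b3) ≤ 0 :=
      mul_nonpos_of_nonneg_of_nonpos ha.1 (by linarith)
    have h2 : b * (2 * P - 4 - (P + 1) * (s.c3 + s.d1)) ≤ 0 :=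
      mul_nonpos_of_nonneg_of_nonpos hb.1 (by linarith)
    have h3 : d * ((P + 1) * s.b3 - 2) = 0 := by
      have : (P + 1) * s.b3 - 2 = 0 := by linarith
      rw [this, mul_zero]
    have h4 : s.d2 * ((P + 1) * s.b3 - 2) = 0 := by
      have : (P + 1) * s.b3 - 2 = 0 := by linarith
      rw [this, mul_zero]
    simp only [E2, ha1, hb1, hc1, ha2, hb2]
    linarith [h1, h2, h3, h4]
  · intro b c d hb hc hd
    simp only [Set.mem_Icc] at hb hc hd
    have h1 : b * (2 * P - 4 - (P + 1) * s.d2) = 0 := by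
      have : 2 * P - 4 - (P + 1) * s.d2 = 0 := by linarith
      rw [this, mul_zero]
    have h1' : s.b3 * (2 * P - 4 - (P + 1) * s.d2) = 0 := by
      have : 2 * P - 4 - (P + 1) * s.d2 = 0 := by linarith
      rw [this, mul_zero]
    simp only [E3, ha1, hb1, hc1, ha2, hb2]
    linarith [h1, h1']
end

section
/- (Solution 2) In the simplified three-player full-street Kuhn poker game with pot size 3 ≤ P ≤ (3+√15)/2, every strategy profile with a₁ = b₁ = 0, a₂ = 1/2, b₂ = 1/(P+1), b₃ = 2/(P+1), c₁ = 2P−6, d₂ = (3+6P−2P²)/(P+1), c₃ = 0, d₁ = (2P−4)/(P+1) and (2P−4)/(P+1) ≤ c₂ + d₃ ≤ 3/(P+1) is an equilibrium. -/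
set_option maxHeartbeats 1600000 in
theorem solution_2_is_equilibrium (P : ℝ) (s : Profile)
    (hP3 : 3 ≤ P) (hP4 : P ≤ (3 + Real.sqrt 15) / 2) (hval : s.valid)
    (ha1 : s.a1 = 0) (hb1 : s.b1 = 0)
    (ha2 : s.a2 = 1 / 2) (hb2 : s.b2 = 1 / (P + 1)) (hb3 : s.b3 = 2 / (P + 1))
    (hc1 : s.c1 = 2 * P - 6) (hd2 : s.d2 = (3 + 6 * P - 2 * P ^ 2) / (P + 1))
    (hc3 : s.c3 = 0) (hd1 : s.d1 = (2 * P - 4) / (P + 1))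
    (h23l : (2 * P - 4) / (P + 1) ≤ s.c2 + s.d3) (h23u : s.c2 + s.d3 ≤ 3 / (P + 1)) :
    IsEquilibrium P s :=
  by
  obtain ⟨a1,b1,c1,d1,a2,b2,c2,d2,b3,c3,d3⟩ := s
  simp only at ha1 hb1 ha2 hb2 hb3 hc1 hd2 hc3 hd1 h23l h23u
  subst ha1 hb1 ha2 hb2 hb3 hc1 hd2 hc3 hd1
  have hP1 : (0:ℝ) < P + 1 := by linarith
  have hu : (P + 1) * (c2 + d3) ≤ 3 := by
    rw [le_div_iff₀ hP1] at h23u; linarith [h23u]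
  have hl : 2 * P - 4 ≤ (P + 1) * (c2 + d3) := by
    rw [div_le_iff₀ hP1] at h23l; linarith [h23l]
  refine ⟨?_, ?_, ?_⟩
  · rintro a b c d ⟨ha0, ha1'⟩ ⟨hb0, hb1'⟩ ⟨hc0, hc1'⟩ ⟨hd0, hd1'⟩
    simp only [E1]
    rw [← sub_nonneg]
    have h : (1:ℝ)/24 * ((-2 * (1/(P+1)) + 2*c2 - 2*(2/(P+1)) + 2*d3 - 1/(P+1)*0) * 0
        + (2*P - 4 - (P+1)*(c2+d3)) * 0
        + (1/(P+1) - 2 + (P + 1/2) * (2/(P+1))) * (2*P-6)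
        + ((P+1) * (1/(P+1)) - 2*(1/2)) * ((2*P-4)/(P+1))
        + (2-P) * (2/(P+1)) + (2 + 0 - P) * (1/(P+1)))
      - 1/24 * ((-2 * (1/(P+1)) + 2*c2 - 2*(2/(P+1)) + 2*d3 - 1/(P+1)*0) * a
        + (2*P - 4 - (P+1)*(c2+d3)) * b
        + (1/(P+1) - 2 + (P + 1/2) * (2/(P+1))) * c
        + ((P+1) * (1/(P+1)) - 2*(1/2)) * d
        + (2-P) * (2/(P+1)) + (2 + 0 - P) * (1/(P+1)))
      = (1/(24*(P+1))) * (a * (3 - (P+1)*(c2+d3)) * 2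
          + b * ((P+1)*(c2+d3) - (2*P-4)) * (P+1)) := by
      field_simp
      ring
    rw [h]
    have h1 : (0:ℝ) ≤ 3 - (P+1)*(c2+d3) := by linarith
    have h2 : (0:ℝ) ≤ (P+1)*(c2+d3) - (2*P-4) := by linarith
    have t1 := mul_nonneg (mul_nonneg ha0 h1) (by norm_num : (0:ℝ) ≤ 2)
    have t2 := mul_nonneg (mul_nonneg hb0 h2) hP1.le
    have : (0:ℝ) ≤ 1/(24*(P+1)) := by positivity
    nlinarith [t1, t2]
  · rintro a b c d _ _ _ _
    apply le_of_eq
    simp only [E2]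
    field_simp
    ring
  · rintro b c d ⟨hb0, _⟩ ⟨hc0, _⟩ ⟨hd0, _⟩
    simp only [E3]
    rw [← sub_nonneg]
    have h : (1:ℝ)/24 * ((2*P - 4 + 2*0 + 2*(1/2) - (P+1)*(2*P-6 + (3+6*P-2*P^2)/(P+1))) * (2/(P+1))
        + ((P+0) * (1/(P+1)) - (2-0) * (1/2)) * 0
        + ((P+1)*0 - 2*0) * d3
        + (2 - P - (2*P-6)) * (1/(P+1)) + 2*(2*P-6)
        + (2 - P + c2 - (3+6*P-2*P^2)/(P+1)) * 0 + 2*((3+6*P-2*P^2)/(P+1)))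
      - 1/24 * ((2*P - 4 + 2*0 + 2*(1/2) - (P+1)*(2*P-6 + (3+6*P-2*P^2)/(P+1))) * b
        + ((P+0) * (1/(P+1)) - (2-0) * (1/2)) * c
        + ((P+1)*0 - 2*0) * d
        + (2 - P - (2*P-6)) * (1/(P+1)) + 2*(2*P-6)
        + (2 - P + c2 - (3+6*P-2*P^2)/(P+1)) * 0 + 2*((3+6*P-2*P^2)/(P+1)))
      = (1/(24*(P+1))) * (c * (P+1) - c * P) := by
      field_simp
      ring
    rw [h]
    have hc' : c * (P+1) - c * P = c := by ring
    rw [hc']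
    have : (0:ℝ) ≤ 1/(24*(P+1)) := by positivity
    exact mul_nonneg this hc0
end

section
/- (Solution 4) In the simplified three-player full-street Kuhn poker game with pot size (3+√97)/4 ≤ P ≤ 7/2, every strategy profile with a₁ = b₁ = 0, a₂ = (5−P)/2, b₂ = (5−P)/(P+1), b₃ = 4(P−2)/(3(P+1)), c₁ = 1, d₂ = 0, c₃ = 0, d₁ = (2P−4)/(P+1) and (2P−4)/(P+1) ≤ c₂ + d₃ ≤ (P+7)/(3(P+1)) is an equilibrium. -/
set_option maxHeartbeats 1600000 in
theorem solution_4_is_equilibrium (P : ℝ) (s : Profile)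
    (hPl : (3 + Real.sqrt 97) / 4 ≤ P) (hPu : P ≤ 7 / 2) (hval : s.valid)
    (ha1 : s.a1 = 0) (hb1 : s.b1 = 0)
    (ha2 : s.a2 = (5 - P) / 2) (hb2 : s.b2 = (5 - P) / (P + 1))
    (hb3 : s.b3 = 4 * (P - 2) / (3 * (P + 1)))
    (hc1 : s.c1 = 1) (hd2 : s.d2 = 0) (hc3 : s.c3 = 0)
    (hd1 : s.d1 = (2 * P - 4) / (P + 1))
    (h23l : (2 * P - 4) / (P + 1) ≤ s.c2 + s.d3)
    (h23u : s.c2 + s.d3 ≤ (P + 7) / (3 * (P + 1))) :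
    IsEquilibrium P s := by
  have hsq : Real.sqrt 97 ^ 2 = 97 := Real.sq_sqrt (by norm_num)
  have hsn : (0:ℝ) ≤ Real.sqrt 97 := Real.sqrt_nonneg 97
  have h9 : (9:ℝ) ≤ Real.sqrt 97 := by nlinarith
  have hP3 : (3:ℝ) ≤ P := by linarith
  have hP1 : (0:ℝ) < P + 1 := by linarith
  have hkey : 0 ≤ 2 * P ^ 2 - 3 * P - 11 := by nlinarith
  have hul : 2 * P - 4 ≤ (P + 1) * (s.c2 + s.d3) := by
    rw [div_le_iff₀ hP1] at h23l; linarith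
  have huu : 3 * (P + 1) * (s.c2 + s.d3) ≤ P + 7 := by
    rw [le_div_iff₀ (by linarith : (0:ℝ) < 3 * (P + 1))] at h23u; linarith
  refine ⟨?_, ?_, ?_⟩
  · intro a b c d ha hb hc hd
    obtain ⟨ha0, ha1'⟩ := ha
    obtain ⟨hb0, hb1'⟩ := hb
    obtain ⟨hc0, hc1'⟩ := hc
    have key : (E1 P s - E1 P { s with a1 := a, b1 := b, c1 := c, d1 := d })
        * (72 * (P + 1))
        = a * (2 * (P + 7) - 6 * (P + 1) * (s.c2 + s.d3))
          + 3 * (P + 1) * b * ((P + 1) * (s.c2 + s.d3) - (2 * P - 4))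
          + (1 - c) * (2 * P ^ 2 - 3 * P - 11) := by
      simp only [E1, ha1, hb1, ha2, hb2, hb3, hc1, hd2, hc3, hd1]
      field_simp
      ring
    have h1 : 0 ≤ a * (2 * (P + 7) - 6 * (P + 1) * (s.c2 + s.d3)) :=
      mul_nonneg ha0 (by linarith)
    have h2 : 0 ≤ 3 * (P + 1) * b * ((P + 1) * (s.c2 + s.d3) - (2 * P - 4)) :=
      mul_nonneg (by positivity) (by linarith)
    have h3 : 0 ≤ (1 - c) * (2 * P ^ 2 - 3 * P - 11) :=
      mul_nonneg (by linarith) hkey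
    have h72 : (0:ℝ) < 72 * (P + 1) := by linarith
    rw [← sub_nonneg, ← mul_nonneg_iff_of_pos_right h72, key]
    linarith
  · intro a b c d ha hb hc hd
    obtain ⟨hd0, hd1'⟩ := hd
    have key : (E2 P s - E2 P { s with a2 := a, b2 := b, c2 := c, d2 := d })
        * 72 = d * (14 - 4 * P) := by
      simp only [E2, ha1, hb1, ha2, hb2, hb3, hc1, hd2, hc3, hd1]
      field_simp
      ring
    have h1 : 0 ≤ d * (14 - 4 * P) := mul_nonneg hd0 (by linarith)
    have h72 : (0:ℝ) < (72:ℝ) := by norm_num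
    rw [← sub_nonneg, ← mul_nonneg_iff_of_pos_right h72, key]
    linarith
  · intro b c d hb hc hd
    obtain ⟨hc0, hc1'⟩ := hc
    have key : (E3 P s - E3 P { s with b3 := b, c3 := c, d3 := d })
        * (24 * (P + 1)) = c * (5 - P) := by
      simp only [E3, ha1, hb1, ha2, hb2, hb3, hc1, hd2, hc3, hd1]
      field_simp
      ring
    have h1 : 0 ≤ c * (5 - P) := mul_nonneg hc0 (by linarith)
    have h24 : (0:ℝ) < 24 * (P + 1) := by linarith
    rw [← sub_nonneg, ← mul_nonneg_iff_of_pos_right h24, key]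
    linarith
end

section
/- (Solution 5) In the simplified three-player full-street Kuhn poker game with pot size 7/2 ≤ P ≤ 4, every strategy profile with a₁ = b₁ = 0, a₂ = 1, b₂ = 2/(P+1), b₃ = 2/(P+1), c₁ = 1, d₂ = (P−3)/(P+1), c₃ = 0, d₁ = (2P−4)/(P+1) and (2P−4)/(P+1) ≤ c₂ + d₃ ≤ 4/(P+1) is an equilibrium. -/
theorem solution_5_is_equilibrium (P : ℝ) (s : Profile)
    (hPl : 7 / 2 ≤ P) (hPu : P ≤ 4) (hval : s.valid)
    (ha1 : s.a1 = 0) (hb1 : s.b1 = 0)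
    (ha2 : s.a2 = 1) (hb2 : s.b2 = 2 / (P + 1)) (hb3 : s.b3 = 2 / (P + 1))
    (hc1 : s.c1 = 1) (hd2 : s.d2 = (P - 3) / (P + 1)) (hc3 : s.c3 = 0)
    (hd1 : s.d1 = (2 * P - 4) / (P + 1))
    (h23l : (2 * P - 4) / (P + 1) ≤ s.c2 + s.d3) (h23u : s.c2 + s.d3 ≤ 4 / (P + 1)) :
    IsEquilibrium P s := by
  have hq : (0:ℝ) < P + 1 := by linarith
  have hqne : P + 1 ≠ 0 := ne_of_gt hq
  have hu1 : (P + 1) * (s.c2 + s.d3) ≤ 4 := by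
    have := (le_div_iff₀ hq).mp h23u
    linarith
  have hu2 : 2 * P - 4 ≤ (P + 1) * (s.c2 + s.d3) := by
    have := (div_le_iff₀ hq).mp h23l
    linarith
  refine ⟨?_, ?_, ?_⟩
  · intro a b c d ha hb hc hd
    rw [← sub_nonneg]
    have key : E1 P s - E1 P { s with a1 := a, b1 := b, c1 := c, d1 := d } =
        (a * (8 - 2 * ((P + 1) * (s.c2 + s.d3)))
          + b * ((P + 1) * ((P + 1) * (s.c2 + s.d3)) - (P + 1) * (2 * P - 4)) + 2 * (1 - c)) / (24 * (P + 1)) := by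
      simp only [E1, ha1, hb1, ha2, hb2, hb3, hc1, hc3]
      field_simp
      ring
    rw [key]
    apply div_nonneg _ (by linarith)
    have h1 : 0 ≤ a * (8 - 2 * ((P + 1) * (s.c2 + s.d3))) :=
      mul_nonneg ha.1 (by linarith)
    have h2 : 0 ≤ b * ((P + 1) * ((P + 1) * (s.c2 + s.d3)) - (P + 1) * (2 * P - 4)) :=
      mul_nonneg hb.1 (by nlinarith)
    have h3 : c ≤ 1 := hc.2
    linarith
  · intro a b c d ha hb hc hd
    rw [← sub_nonneg]
    have key : E2 P s - E2 P { s with a2 := a, b2 := b, c2 := c, d2 := d } =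
        ((4 * P - 14) * (1 - a)) / (24 * (P + 1)) := by
      simp only [E2, ha1, hb1, ha2, hb3, hc1, hc3, hd1]
      field_simp
      ring
    rw [key]
    apply div_nonneg _ (by linarith)
    exact mul_nonneg (by linarith) (by linarith [ha.2])
  · intro b c d hb hc hd
    rw [← sub_nonneg]
    have key : E3 P s - E3 P { s with b3 := b, c3 := c, d3 := d } =
        (2 * c) / (24 * (P + 1)) := by
      simp only [E3, ha1, hb1, ha2, hb2, hc1, hc3, hd2]
      field_simp
      ring
    rw [key]
    apply div_nonneg _ (by linarith)
    linarith [hc.1]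
end

section
/- (Solution 6) In the simplified three-player full-street Kuhn poker game with pot size (3+√23)/2 ≤ P ≤ 4, the strategy profile with a₁ = (4−P)(P+1), b₁ = 2(4−P), a₂ = 1, b₂ = 2/(P+1), b₃ = 2(P−3)/(P+1), c₁ = 1, d₂ = (5+7P−2P²)/(P+1), c₃ = 0, d₁ = (4+8P−2P²)/(P+1), c₂ = 0 and d₃ = (2P−4)/(P+1) is an equilibrium. -/
set_option maxHeartbeats 1000000 in
theorem solution_6_is_equilibrium (P : ℝ) (s : Profile)
    (hPl : (3 + Real.sqrt 23) / 2 ≤ P) (hPu : P ≤ 4) (hval : s.valid)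
    (ha1 : s.a1 = (4 - P) * (P + 1)) (hb1 : s.b1 = 2 * (4 - P))
    (ha2 : s.a2 = 1) (hb2 : s.b2 = 2 / (P + 1)) (hb3 : s.b3 = 2 * (P - 3) / (P + 1))
    (hc1 : s.c1 = 1) (hd2 : s.d2 = (5 + 7 * P - 2 * P ^ 2) / (P + 1)) (hc3 : s.c3 = 0)
    (hd1 : s.d1 = (4 + 8 * P - 2 * P ^ 2) / (P + 1))
    (hc2 : s.c2 = 0) (hd3 : s.d3 = (2 * P - 4) / (P + 1)) :
    IsEquilibrium P s := by
  have hs23 : Real.sqrt 23 ^ 2 = 23 := Real.sq_sqrt (by norm_num)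
  have hs23' : Real.sqrt 23 ≥ 0 := Real.sqrt_nonneg 23
  have hP0 : 0 < P + 1 := by nlinarith
  have hP0' : P + 1 ≠ 0 := ne_of_gt hP0
  have hq : 2 * P ^ 2 - 6 * P - 7 ≥ 0 := by nlinarith
  have h2 : -4 * P ^ 2 + 10 * P + 26 ≥ 0 := by nlinarith
  obtain ⟨a1, b1, c1, d1, a2, b2, c2, d2, b3, c3, d3⟩ := s
  simp only at ha1 hb1 ha2 hb2 hb3 hc1 hd2 hc3 hd1 hc2 hd3
  subst ha1 hb1 ha2 hb2 hb3 hc1 hd2 hc3 hd1 hc2 hd3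
  refine ⟨?_, ?_, ?_⟩
  · intro a b c d ha hb hc hd
    obtain ⟨hc0, hc1'⟩ := Set.mem_Icc.mp hc
    rw [← sub_nonneg]
    have key : E1 P ⟨(4 - P) * (P + 1), 2 * (4 - P), 1, (4 + 8 * P - 2 * P ^ 2) / (P + 1),
          1, 2 / (P + 1), 0, (5 + 7 * P - 2 * P ^ 2) / (P + 1),
          2 * (P - 3) / (P + 1), 0, (2 * P - 4) / (P + 1)⟩
        - E1 P ⟨a, b, c, d,
          1, 2 / (P + 1), 0, (5 + 7 * P - 2 * P ^ 2) / (P + 1),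
          2 * (P - 3) / (P + 1), 0, (2 * P - 4) / (P + 1)⟩
        = (1 / 24) * ((2 * P ^ 2 - 6 * P - 6) / (P + 1)) * (1 - c) := by
      simp only [E1]
      field_simp
      ring
    rw [key]
    have hcoef : (2 * P ^ 2 - 6 * P - 6) / (P + 1) ≥ 0 := by
      apply div_nonneg _ (le_of_lt hP0); linarith
    have h1c : (0:ℝ) ≤ 1 - c := by linarith
    positivity
  · intro a b c d ha hb hc hd
    obtain ⟨ha0, ha1'⟩ := Set.mem_Icc.mp ha
    obtain ⟨hc0, hc1'⟩ := Set.mem_Icc.mp hc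
    rw [← sub_nonneg]
    have key : E2 P ⟨(4 - P) * (P + 1), 2 * (4 - P), 1, (4 + 8 * P - 2 * P ^ 2) / (P + 1),
          1, 2 / (P + 1), 0, (5 + 7 * P - 2 * P ^ 2) / (P + 1),
          2 * (P - 3) / (P + 1), 0, (2 * P - 4) / (P + 1)⟩
        - E2 P ⟨(4 - P) * (P + 1), 2 * (4 - P), 1, (4 + 8 * P - 2 * P ^ 2) / (P + 1),
          a, b, c, d,
          2 * (P - 3) / (P + 1), 0, (2 * P - 4) / (P + 1)⟩
        = (1 / 24) * (((-4 * P ^ 2 + 10 * P + 26) / (P + 1)) * (1 - a)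
            + 2 * (4 - P) * c) := by
      simp only [E2]
      field_simp
      ring
    rw [key]
    have hcoef : (-4 * P ^ 2 + 10 * P + 26) / (P + 1) ≥ 0 :=
      div_nonneg h2 (le_of_lt hP0)
    have h1a : (0:ℝ) ≤ 1 - a := by linarith
    have h4P : (0:ℝ) ≤ 2 * (4 - P) := by linarith
    have := mul_nonneg hcoef h1a
    have := mul_nonneg h4P hc0
    linarith
  · intro b c d hb hc hd
    obtain ⟨hc0, hc1'⟩ := Set.mem_Icc.mp hc
    rw [← sub_nonneg]
    have key : E3 P ⟨(4 - P) * (P + 1), 2 * (4 - P), 1, (4 + 8 * P - 2 * P ^ 2) / (P + 1),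
          1, 2 / (P + 1), 0, (5 + 7 * P - 2 * P ^ 2) / (P + 1),
          2 * (P - 3) / (P + 1), 0, (2 * P - 4) / (P + 1)⟩
        - E3 P ⟨(4 - P) * (P + 1), 2 * (4 - P), 1, (4 + 8 * P - 2 * P ^ 2) / (P + 1),
          1, 2 / (P + 1), 0, (5 + 7 * P - 2 * P ^ 2) / (P + 1),
          b, c, d⟩
        = (1 / 24) * ((2 * (2 * P ^ 2 - 6 * P - 7) / (P + 1)) * c) := by
      simp only [E3]
      field_simp
      ring
    rw [key]
    have hcoef : 2 * (2 * P ^ 2 - 6 * P - 7) / (P + 1) ≥ 0 := by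
      apply div_nonneg _ (le_of_lt hP0); linarith
    have := mul_nonneg hcoef hc0
    linarith
end

section
/- (Solution 7) In the simplified three-player full-street Kuhn poker game with pot size (3+√23)/2 ≤ P ≤ (7+√113)/4, the strategy profile with a₁ = 1/2, b₁ = 1/(P+1), a₂ = 1, b₂ = 2/(P+1), b₃ = (2P+1)/(P+1)², c₁ = 1, d₂ = (P−2)/(P+1), c₃ = (2P²−6P−7)/(P+1), d₁ = (4+8P−2P²)/(P+1), c₂ = 0 and d₃ = (2P−4)/(P+1) is an equilibrium. -/
set_option maxHeartbeats 1600000 in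
theorem solution_7_is_equilibrium (P : ℝ) (s : Profile)
    (hPl : (3 + Real.sqrt 23) / 2 ≤ P) (hPu : P ≤ (7 + Real.sqrt 113) / 4)
    (hval : s.valid)
    (ha1 : s.a1 = 1 / 2) (hb1 : s.b1 = 1 / (P + 1))
    (ha2 : s.a2 = 1) (hb2 : s.b2 = 2 / (P + 1))
    (hb3 : s.b3 = (2 * P + 1) / (P + 1) ^ 2)
    (hc1 : s.c1 = 1) (hd2 : s.d2 = (P - 2) / (P + 1))
    (hc3 : s.c3 = (2 * P ^ 2 - 6 * P - 7) / (P + 1))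
    (hd1 : s.d1 = (4 + 8 * P - 2 * P ^ 2) / (P + 1))
    (hc2 : s.c2 = 0) (hd3 : s.d3 = (2 * P - 4) / (P + 1)) :
    IsEquilibrium P s := by
  have h23 : (4:ℝ) ≤ Real.sqrt 23 := by
    nlinarith [Real.sq_sqrt (show (0:ℝ) ≤ 23 by norm_num), Real.sqrt_nonneg 23]
  have hP : (7:ℝ)/2 ≤ P := by linarith
  have hq : (0:ℝ) < P + 1 := by linarith
  have hq' : P + 1 ≠ 0 := ne_of_gt hq
  refine ⟨?_, ?_, ?_⟩
  · intro a b c d ha hb hc hd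
    have hEq : E1 P { s with a1 := a, b1 := b, c1 := c, d1 := d }
        = E1 P s + (1/24) * ((c - 1) / (P + 1)) := by
      simp only [E1, ha1, hb1, ha2, hb2, hb3, hc1, hd2, hc3, hd1, hc2, hd3]
      field_simp
      ring
    rw [hEq]
    have h1 : (c - 1) / (P + 1) ≤ 0 :=
      div_nonpos_of_nonpos_of_nonneg (by linarith [hc.2]) hq.le
    linarith
  · intro a b c d ha hb hc hd
    have hEq : E2 P { s with a2 := a, b2 := b, c2 := c, d2 := d }
        = E2 P s + (1/24) * ((2 * (P^2 - P - 1)) / (P + 1)^2 * (a - 1)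
            - c / (P + 1)) := by
      simp only [E2, ha1, hb1, ha2, hb2, hb3, hc1, hd2, hc3, hd1, hc2, hd3]
      field_simp
      ring
    rw [hEq]
    have h1 : (2 * (P^2 - P - 1)) / (P + 1)^2 * (a - 1) ≤ 0 := by
      apply mul_nonpos_of_nonneg_of_nonpos
      · apply div_nonneg (by nlinarith) (by positivity)
      · linarith [ha.2]
    have h2 : 0 ≤ c / (P + 1) := div_nonneg hc.1 hq.le
    linarith
  · intro b c d hb hc hd
    have hEq : E3 P { s with b3 := b, c3 := c, d3 := d } = E3 P s := by
      simp only [E3, ha1, hb1, ha2, hb2, hb3, hc1, hd2, hc3, hd1, hc2, hd3]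
      field_simp
      ring
    rw [hEq]
end

section
/- (Solution 8) In the simplified three-player full-street Kuhn poker game with pot size (7+√105)/4 ≤ P ≤ (7+√113)/4, the strategy profile with a₁ = (9−2P)(P+1)/2, b₁ = 9−2P, a₂ = 1, b₂ = 2/(P+1), b₃ = (2P−7)/(P+1), c₁ = 1, d₂ = (6+8P−2P²)/(P+1), c₃ = 1, d₁ = (4+8P−2P²)/(P+1), c₂ = 0 and d₃ = (2P−4)/(P+1) is an equilibrium. -/
set_option maxHeartbeats 1600000 in
theorem solution_8_is_equilibrium (P : ℝ) (s : Profile)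
    (hPl : (7 + Real.sqrt 105) / 4 ≤ P) (hPu : P ≤ (7 + Real.sqrt 113) / 4)
    (hval : s.valid)
    (ha1 : s.a1 = (9 - 2 * P) * (P + 1) / 2) (hb1 : s.b1 = 9 - 2 * P)
    (ha2 : s.a2 = 1) (hb2 : s.b2 = 2 / (P + 1)) (hb3 : s.b3 = (2 * P - 7) / (P + 1))
    (hc1 : s.c1 = 1) (hd2 : s.d2 = (6 + 8 * P - 2 * P ^ 2) / (P + 1)) (hc3 : s.c3 = 1)
    (hd1 : s.d1 = (4 + 8 * P - 2 * P ^ 2) / (P + 1))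
    (hc2 : s.c2 = 0) (hd3 : s.d3 = (2 * P - 4) / (P + 1)) :
    IsEquilibrium P s := by
  have hs105 : Real.sqrt 105 ^ 2 = 105 := Real.sq_sqrt (by norm_num)
  have hs113 : Real.sqrt 113 ^ 2 = 113 := Real.sq_sqrt (by norm_num)
  have hs105n : (0:ℝ) ≤ Real.sqrt 105 := Real.sqrt_nonneg _
  have hs113le : Real.sqrt 113 ≤ 11 := by
    nlinarith [Real.sqrt_nonneg (113:ℝ)]
  have hs105ge : (10:ℝ) ≤ Real.sqrt 105 := by
    nlinarith [Real.sqrt_nonneg (105:ℝ)]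
  have hPlo : (17:ℝ)/4 ≤ P := by linarith
  have hPhi : P ≤ (9:ℝ)/2 := by linarith
  have hP1 : (0:ℝ) < P + 1 := by linarith
  have hP1' : (P:ℝ) + 1 ≠ 0 := ne_of_gt hP1
  -- exact quadratic bounds from the sqrt constraints
  have h105 : 0 ≤ 2*P^2 - 7*P - 7 := by nlinarith [hPl, hs105, hs105n]
  have h113 : 2*P^2 - 7*P - 8 ≤ 0 := by nlinarith [hPu, hs113, Real.sqrt_nonneg (113:ℝ)]
  have hA2 : 0 ≤ -2*P^2 + 5*P + 22 := by nlinarith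
  refine ⟨?_, ?_, ?_⟩
  · intro a b c d ha hb hc hd
    have key : E1 P { s with a1 := a, b1 := b, c1 := c, d1 := d } - E1 P s
        = (1/24) * ((2*P^2 - 7*P - 7)/(P+1)) * (c - 1) := by
      simp only [E1, ha1, hb1, ha2, hb2, hb3, hc1, hd2, hc3, hd1, hc2, hd3]
      field_simp
      ring
    have hcle : c ≤ 1 := hc.2
    have hC : 0 ≤ (2*P^2 - 7*P - 7)/(P+1) := div_nonneg h105 (le_of_lt hP1)
    nlinarith [mul_nonneg hC (sub_nonneg.mpr hcle)]
  · intro a b c d ha hb hc hd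
    have key : E2 P { s with a2 := a, b2 := b, c2 := c, d2 := d } - E2 P s
        = (1/24) * (((-2*P^2 + 5*P + 22)/(P+1)) * (a - 1) + (2*P - 9) * c) := by
      simp only [E2, ha1, hb1, ha2, hb2, hb3, hc1, hd2, hc3, hd1, hc2, hd3]
      field_simp
      ring
    have hale : a ≤ 1 := ha.2
    have hc0 : 0 ≤ c := hc.1
    have hA : 0 ≤ (-2*P^2 + 5*P + 22)/(P+1) := div_nonneg hA2 (le_of_lt hP1)
    nlinarith [mul_nonneg hA (sub_nonneg.mpr hale), mul_nonneg hc0 (show (0:ℝ) ≤ 9 - 2*P by linarith)]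
  · intro b c d hb hc hd
    have key : E3 P { s with b3 := b, c3 := c, d3 := d } - E3 P s
        = (1/24) * ((-4*P^2 + 14*P + 16)/(P+1)) * (c - 1) := by
      simp only [E3, ha1, hb1, ha2, hb2, hb3, hc1, hd2, hc3, hd1, hc2, hd3]
      field_simp
      ring
    have hcle : c ≤ 1 := hc.2
    have hC : 0 ≤ (-4*P^2 + 14*P + 16)/(P+1) := div_nonneg (by linarith) (le_of_lt hP1)
    nlinarith [mul_nonneg hC (sub_nonneg.mpr hcle)]
end

section
/- (Solution 9) In the simplified three-player full-street Kuhn poker game with pot size (7+√105)/4 ≤ P ≤ 5, every strategy profile with a₁ = 1, b₁ = 2/(P+1), a₂ = 1, b₂ = 2/(P+1), b₃ = 2P/(P+1)², c₁ + d₂ = 2P/(P+1), c₃ = 1, d₁ = (P−3)/(P+1), c₂ = 0 and d₃ = (2P−4)/(P+1) is an equilibrium. -/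
set_option maxHeartbeats 1000000 in
theorem solution_9_is_equilibrium (P : ℝ) (s : Profile)
    (hPl : (7 + Real.sqrt 105) / 4 ≤ P) (hPu : P ≤ 5) (hval : s.valid)
    (ha1 : s.a1 = 1) (hb1 : s.b1 = 2 / (P + 1))
    (ha2 : s.a2 = 1) (hb2 : s.b2 = 2 / (P + 1))
    (hb3 : s.b3 = 2 * P / (P + 1) ^ 2)
    (hc1d2 : s.c1 + s.d2 = 2 * P / (P + 1)) (hc3 : s.c3 = 1)
    (hd1 : s.d1 = (P - 3) / (P + 1))
    (hc2 : s.c2 = 0) (hd3 : s.d3 = (2 * P - 4) / (P + 1)) :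
    IsEquilibrium P s := by
  have hs : Real.sqrt 105 ≤ 4 * P - 7 := by linarith
  have hsq : Real.sqrt 105 ^ 2 = 105 := Real.sq_sqrt (by norm_num)
  have hsn : (0:ℝ) ≤ Real.sqrt 105 := Real.sqrt_nonneg 105
  have key : 16 * P ^ 2 - 56 * P - 56 ≥ 0 := by nlinarith
  have hP4 : P ≥ 4 := by nlinarith
  have hQ : P + 1 > 0 := by linarith
  have hQne : P + 1 ≠ 0 := ne_of_gt hQ
  obtain ⟨hA1, hB1, hC1, hD1, hA2, hB2, hC2, hD2, hB3, hC3, hD3⟩ := hval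
  refine ⟨?_, ?_, ?_⟩
  · intro a b c d ha hb hc hd
    have h1 : 1 - a ≥ 0 := by linarith [ha.2]
    have heq : E1 P s - E1 P { s with a1 := a, b1 := b, c1 := c, d1 := d } =
        (16 * P ^ 2 - 56 * P - 56) * (1 - a) / (96 * (P + 1) ^ 2) := by
      simp only [E1, ha1, hb1, ha2, hb2, hb3, hc3, hc2, hd1, hd3]
      field_simp
      ring
    have hpos : (0:ℝ) ≤ (16 * P ^ 2 - 56 * P - 56) * (1 - a) / (96 * (P + 1) ^ 2) :=
      div_nonneg (mul_nonneg key h1) (by positivity)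
    linarith [heq, hpos]
  · intro a b c d ha hb hc hd
    have h1 : 1 - a ≥ 0 := by linarith [ha.2]
    have hk2 : 16 * P ^ 2 - 24 * P - 24 - 8 * P * s.c1 ≥ 0 := by nlinarith [hC1.2]
    have heq : E2 P s - E2 P { s with a2 := a, b2 := b, c2 := c, d2 := d } =
        ((16 * P ^ 2 - 24 * P - 24 - 8 * P * s.c1) * (1 - a) + 8 * c * (P + 1))
          / (96 * (P + 1) ^ 2) := by
      simp only [E2, ha1, hb1, ha2, hb2, hb3, hc3, hc2, hd1, hd3]
      rw [eq_div_iff (by positivity)]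
      field_simp
      ring
    have hpos1 : (0:ℝ) ≤ ((16 * P ^ 2 - 24 * P - 24 - 8 * P * s.c1) * (1 - a) + 8 * c * (P + 1))
          / (96 * (P + 1) ^ 2) := by
      apply div_nonneg _ (by positivity)
      have := mul_nonneg hk2 h1
      nlinarith [hc.1]
    linarith [heq, hpos1]
  · intro b c d hb hc hd
    have h1 : 1 - c ≥ 0 := by linarith [hc.2]
    have heq : E3 P s - E3 P { s with b3 := b, c3 := c, d3 := d } =
        2 * (1 - c) / (24 * (P + 1)) := by
      simp only [E3, ha1, hb1, ha2, hb2, hb3, hc3, hc2, hd1, hd3, hc1d2]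
      field_simp
      ring
    have hpos : (0:ℝ) ≤ 2 * (1 - c) / (24 * (P + 1)) :=
      div_nonneg (by linarith) (by positivity)
    linarith [heq, hpos]
end

section
/- (Solution 10) In the simplified three-player full-street Kuhn poker game with pot size P ≥ 5, the strategy profile with a₁ = 1, b₁ = 2/P, a₂ = 1, b₂ = 2/(P+1), b₃ = 2P/(P+1)², c₁ = (P−1)/(P+1), d₂ = 1, c₃ = 1, d₁ = (P−3)/(P+1), c₂ = (P−5)/(P+1) and d₃ = 1 is an equilibrium. -/
set_option maxHeartbeats 2000000 in
theorem solution_10_is_equilibrium (P : ℝ) (s : Profile)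
    (hP : 5 ≤ P) (hval : s.valid)
    (ha1 : s.a1 = 1) (hb1 : s.b1 = 2 / P)
    (ha2 : s.a2 = 1) (hb2 : s.b2 = 2 / (P + 1))
    (hb3 : s.b3 = 2 * P / (P + 1) ^ 2)
    (hc1 : s.c1 = (P - 1) / (P + 1)) (hd2 : s.d2 = 1) (hc3 : s.c3 = 1)
    (hd1 : s.d1 = (P - 3) / (P + 1))
    (hc2 : s.c2 = (P - 5) / (P + 1)) (hd3 : s.d3 = 1) :
    IsEquilibrium P s := by
  obtain ⟨hP0, hP1⟩ : (0:ℝ) < P ∧ (0:ℝ) < P + 1 := ⟨by linarith, by linarith⟩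
  refine ⟨?_, ?_, ?_⟩
  · intro a b c d ha hb hc hd
    have key : E1 P { s with a1 := a, b1 := b, c1 := c, d1 := d } - E1 P s
        = (1/24) * ((4*P^2 - 14*P - 14)/(P+1)^2) * (a - 1) := by
      simp only [E1, ha1, hb1, ha2, hb2, hb3, hc1, hd2, hc3, hd1, hc2, hd3]
      field_simp
      ring
    have h1 : (0:ℝ) ≤ (4*P^2 - 14*P - 14)/(P+1)^2 :=
      div_nonneg (by nlinarith) (by positivity)
    nlinarith [mul_nonneg h1 (by linarith [ha.2] : (0:ℝ) ≤ 1 - a)]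
  · intro a b c d ha hb hc hd
    have key : E2 P { s with a2 := a, b2 := b, c2 := c, d2 := d } - E2 P s
        = (1/24) * (((4*P^4 - 4*P^3 - 12*P^2 - 10*P - 2)/(P*(P+1)^3)) * (a - 1)
            + (2/(P*(P+1))) * (d - 1)) := by
      simp only [E2, ha1, hb1, ha2, hb2, hb3, hc1, hd2, hc3, hd1, hc2, hd3]
      field_simp
      ring
    have hp2 : 25 ≤ P^2 := by nlinarith
    have hp3 : 125 ≤ P^3 := by nlinarith
    have hp4 : 5*P^3 ≤ P^4 := by nlinarith [sq_nonneg P, mul_nonneg (mul_nonneg hP0.le hP0.le) (by linarith : (0:ℝ) ≤ P - 5)]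
    have h1 : (0:ℝ) ≤ (4*P^4 - 4*P^3 - 12*P^2 - 10*P - 2)/(P*(P+1)^3) :=
      div_nonneg (by nlinarith) (by positivity)
    have h2 : (0:ℝ) ≤ 2/(P*(P+1)) := by positivity
    nlinarith [mul_nonneg h1 (by linarith [ha.2] : (0:ℝ) ≤ 1 - a),
      mul_nonneg h2 (by linarith [hd.2] : (0:ℝ) ≤ 1 - d)]
  · intro b c d hb hc hd
    have key : E3 P { s with b3 := b, c3 := c, d3 := d } - E3 P s
        = (1/24) * ((2/P) * (c - 1) + (2/P) * (d - 1)) := by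
      simp only [E3, ha1, hb1, ha2, hb2, hb3, hc1, hd2, hc3, hd1, hc2, hd3]
      field_simp
      ring
    have h2 : (0:ℝ) ≤ 2/P := by positivity
    nlinarith [mul_nonneg h2 (by linarith [hc.2] : (0:ℝ) ≤ 1 - c),
      mul_nonneg h2 (by linarith [hd.2] : (0:ℝ) ≤ 1 - d)]
end

section
/- (Solution 2a with profits) In the simplified three-player full-street Kuhn poker game with pot size P = 3, every strategy profile with a₁ = b₁ = 0, b₂ = a₂/2, a₂ ≤ 1/2, b₃ = 1/2, c₁ = 0, d₂ = (1+a₂)/2, c₃ = 0, d₁ = 1/2 and 1/2 ≤ c₂ + d₃ ≤ 1/2 + b₂ is an equilibrium, and at any such profile the expected profits satisfy 24E₁ = −1/2 − a₂/2, 24E₂ = −1/2 and 24E₃ = 1 + a₂/2; in particular Player 2's choice of a₂ transfers profit between Players 1 and 3 at no cost to herself. -/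
theorem solution_2a_is_equilibrium_with_profits (P : ℝ) (s : Profile)
    (hP : P = 3) (hval : s.valid)
    (ha1 : s.a1 = 0) (hb1 : s.b1 = 0)
    (hb2 : s.b2 = s.a2 / 2) (ha2 : s.a2 ≤ 1 / 2) (hb3 : s.b3 = 1 / 2)
    (hc1 : s.c1 = 0) (hd2 : s.d2 = (1 + s.a2) / 2) (hc3 : s.c3 = 0)
    (hd1 : s.d1 = 1 / 2)
    (h23l : 1 / 2 ≤ s.c2 + s.d3) (h23u : s.c2 + s.d3 ≤ 1 / 2 + s.b2) :
    IsEquilibrium P s ∧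
      24 * E1 P s = -(1 / 2) - s.a2 / 2 ∧
      24 * E2 P s = -(1 / 2) ∧
      24 * E3 P s = 1 + s.a2 / 2 := by
  obtain ⟨h1, h2, h3, h4, ⟨ha20, _⟩, h6, ⟨hc20, hc21⟩, h8, h9, h10, ⟨hd30, hd31⟩⟩ := hval
  subst hP
  refine ⟨⟨?_, ?_, ?_⟩, ?_, ?_, ?_⟩
  · intro a b c d ha hb hc hd
    simp only [E1]
    rw [ha1, hb1, hc1, hd1, hb2, hb3, hc3] at *
    nlinarith [mul_nonneg ha.1 (by linarith : 1 + s.a2 - 2*(s.c2 + s.d3) ≥ 0),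
      mul_nonneg hb.1 (by linarith : 4*(s.c2+s.d3) - 2 ≥ 0),
      mul_nonneg hc.1 (by linarith : 1/2 - s.a2 ≥ 0)]
  · intro a b c d ha hb hc hd
    simp only [E2]
    rw [ha1, hb1, hc1, hd1, hb2, hb3, hc3] at *
    nlinarith
  · intro b c d hb hc hd
    simp only [E3]
    rw [ha1, hb1, hc1, hd2, hb2, hb3, hc3] at *
    nlinarith [mul_nonneg hc.1 ha20]
  · simp only [E1]; rw [ha1, hb1, hc1, hd1, hb2, hb3, hc3]; ring
  · simp only [E2]; rw [ha1, hb1, hc1, hd1, hb2, hb3, hc3]; ring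
  · simp only [E3]; rw [ha1, hb1, hc1, hd2, hb2, hb3, hc3]; ring
end

section
/- (Uniqueness for 2 < P < 3) In the simplified three-player full-street Kuhn poker game with pot size P satisfying 2 < P < 3, every equilibrium strategy profile satisfies a₁ = b₁ = a₂ = b₂ = 0, b₃ = 2/(P+1), c₁ = 0, d₂ = (2P−4)/(P+1), (2P−4)/(P+1) ≤ c₃ + d₁ ≤ 2/(P+1) and (2P−4)/(P+1) ≤ c₂ + d₃ ≤ 2/(P+1); that is, the equilibria are exactly those of Solution 1. -/
private lemma coef_nonneg {c x : ℝ} (h : 0 ≤ c * x) (hx : 0 < x) : 0 ≤ c := by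
  by_contra hc
  push_neg at hc
  nlinarith

private lemma coef_nonpos {c x : ℝ} (h : 0 ≤ c * (x - 1)) (hx : x < 1) : c ≤ 0 := by
  by_contra hc
  push_neg at hc
  nlinarith

private lemma var_zero {c x : ℝ} (h : 0 ≤ c * x) (hx : 0 ≤ x) (hc : c < 0) : x = 0 := by
  by_contra hxx
  have h2 : 0 < x := lt_of_le_of_ne hx (Ne.symm hxx)
  nlinarith

private lemma var_one {c x : ℝ} (h : 0 ≤ c * (x - 1)) (hx : x ≤ 1) (hc : 0 < c) : x = 1 := by
  by_contra hxx
  have h2 : x < 1 := lt_of_le_of_ne hx hxx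
  nlinarith

set_option maxHeartbeats 8000000 in
theorem equilibrium_unique_for_small_pot (P : ℝ) (s : Profile)
    (hP2 : 2 < P) (hP3 : P < 3) (hval : s.valid) (heq : IsEquilibrium P s) :
    s.a1 = 0 ∧ s.b1 = 0 ∧ s.a2 = 0 ∧ s.b2 = 0 ∧
      s.b3 = 2 / (P + 1) ∧ s.c1 = 0 ∧ s.d2 = (2 * P - 4) / (P + 1) ∧
      (2 * P - 4) / (P + 1) ≤ s.c3 + s.d1 ∧ s.c3 + s.d1 ≤ 2 / (P + 1) ∧
      (2 * P - 4) / (P + 1) ≤ s.c2 + s.d3 ∧ s.c2 + s.d3 ≤ 2 / (P + 1) := by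

  obtain ⟨⟨a1l,a1u⟩,⟨b1l,b1u⟩,⟨c1l,c1u⟩,⟨d1l,d1u⟩,⟨a2l,a2u⟩,⟨b2l,b2u⟩,
    ⟨c2l,c2u⟩,⟨d2l,d2u⟩,⟨b3l,b3u⟩,⟨c3l,c3u⟩,⟨d3l,d3u⟩⟩ := hval
  have hp1 : (0:ℝ) < P + 1 := by linarith
  have key1 : ∀ a b c d : ℝ, 0 ≤ a → a ≤ 1 → 0 ≤ b → b ≤ 1 → 0 ≤ c → c ≤ 1 → 0 ≤ d → d ≤ 1 →
      0 ≤ (-2*s.b2+2*s.c2-2*s.b3+2*s.d3-s.b2*s.c3) * (s.a1-a)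
        + (2*P-4-(P+1)*(s.c2+s.d3)) * (s.b1-b)
        + (s.b2-2+(P+s.a2)*s.b3) * (s.c1-c)
        + ((P+1)*s.b2-2*s.a2) * (s.d1-d) := by
    intro a b c d h1 h2 h3 h4 h5 h6 h7 h8
    have h := heq.1 a b c d (Set.mem_Icc.mpr ⟨h1,h2⟩) (Set.mem_Icc.mpr ⟨h3,h4⟩)
      (Set.mem_Icc.mpr ⟨h5,h6⟩) (Set.mem_Icc.mpr ⟨h7,h8⟩)
    simp only [E1] at h
    linarith only [h]
  have key2 : ∀ a b c d : ℝ, 0 ≤ a → a ≤ 1 → 0 ≤ b → b ≤ 1 → 0 ≤ c → c ≤ 1 → 0 ≤ d → d ≤ 1 →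
      0 ≤ (2*s.d1+2*s.c3-2*s.b3-s.c1*s.b3-s.b1*s.c3) * (s.a2-a)
        + (2*P-4+2*s.a1-(P+1)*(s.c3+s.d1)) * (s.b2-b)
        + (P*s.b1-2*s.a1) * (s.c2-c)
        + ((P+1)*s.b3-2+s.b1) * (s.d2-d) := by
    intro a b c d h1 h2 h3 h4 h5 h6 h7 h8
    have h := heq.2.1 a b c d (Set.mem_Icc.mpr ⟨h1,h2⟩) (Set.mem_Icc.mpr ⟨h3,h4⟩)
      (Set.mem_Icc.mpr ⟨h5,h6⟩) (Set.mem_Icc.mpr ⟨h7,h8⟩)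
    simp only [E2] at h
    linarith only [h]
  have key3 : ∀ b c d : ℝ, 0 ≤ b → b ≤ 1 → 0 ≤ c → c ≤ 1 → 0 ≤ d → d ≤ 1 →
      0 ≤ (2*P-4+2*s.a1+2*s.a2-(P+1)*(s.c1+s.d2)) * (s.b3-b)
        + ((P+s.a1)*s.b2-(2-s.b1)*s.a2) * (s.c3-c)
        + ((P+1)*s.b1-2*s.a1) * (s.d3-d) := by
    intro b c d h1 h2 h3 h4 h5 h6
    have h := heq.2.2 b c d (Set.mem_Icc.mpr ⟨h1,h2⟩) (Set.mem_Icc.mpr ⟨h3,h4⟩)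
      (Set.mem_Icc.mpr ⟨h5,h6⟩)
    simp only [E3] at h
    linarith only [h]
  -- the 22 product facts
  have hA1x : 0 ≤ (-2*s.b2+2*s.c2-2*s.b3+2*s.d3-s.b2*s.c3) * s.a1 := by
    linarith only [key1 0 s.b1 s.c1 s.d1 le_rfl zero_le_one b1l b1u c1l c1u d1l d1u]
  have hA1y : 0 ≤ (-2*s.b2+2*s.c2-2*s.b3+2*s.d3-s.b2*s.c3) * (s.a1-1) := by
    linarith only [key1 1 s.b1 s.c1 s.d1 zero_le_one le_rfl b1l b1u c1l c1u d1l d1u]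
  have hB1x : 0 ≤ (2*P-4-(P+1)*(s.c2+s.d3)) * s.b1 := by
    linarith only [key1 s.a1 0 s.c1 s.d1 a1l a1u le_rfl zero_le_one c1l c1u d1l d1u]
  have hB1y : 0 ≤ (2*P-4-(P+1)*(s.c2+s.d3)) * (s.b1-1) := by
    linarith only [key1 s.a1 1 s.c1 s.d1 a1l a1u zero_le_one le_rfl c1l c1u d1l d1u]
  have hC1x : 0 ≤ (s.b2-2+(P+s.a2)*s.b3) * s.c1 := by
    linarith only [key1 s.a1 s.b1 0 s.d1 a1l a1u b1l b1u le_rfl zero_le_one d1l d1u]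
  have hC1y : 0 ≤ (s.b2-2+(P+s.a2)*s.b3) * (s.c1-1) := by
    linarith only [key1 s.a1 s.b1 1 s.d1 a1l a1u b1l b1u zero_le_one le_rfl d1l d1u]
  have hD1x : 0 ≤ ((P+1)*s.b2-2*s.a2) * s.d1 := by
    linarith only [key1 s.a1 s.b1 s.c1 0 a1l a1u b1l b1u c1l c1u le_rfl zero_le_one]
  have hD1y : 0 ≤ ((P+1)*s.b2-2*s.a2) * (s.d1-1) := by
    linarith only [key1 s.a1 s.b1 s.c1 1 a1l a1u b1l b1u c1l c1u zero_le_one le_rfl]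
  have hA2x : 0 ≤ (2*s.d1+2*s.c3-2*s.b3-s.c1*s.b3-s.b1*s.c3) * s.a2 := by
    linarith only [key2 0 s.b2 s.c2 s.d2 le_rfl zero_le_one b2l b2u c2l c2u d2l d2u]
  have hA2y : 0 ≤ (2*s.d1+2*s.c3-2*s.b3-s.c1*s.b3-s.b1*s.c3) * (s.a2-1) := by
    linarith only [key2 1 s.b2 s.c2 s.d2 zero_le_one le_rfl b2l b2u c2l c2u d2l d2u]
  have hB2x : 0 ≤ (2*P-4+2*s.a1-(P+1)*(s.c3+s.d1)) * s.b2 := by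
    linarith only [key2 s.a2 0 s.c2 s.d2 a2l a2u le_rfl zero_le_one c2l c2u d2l d2u]
  have hB2y : 0 ≤ (2*P-4+2*s.a1-(P+1)*(s.c3+s.d1)) * (s.b2-1) := by
    linarith only [key2 s.a2 1 s.c2 s.d2 a2l a2u zero_le_one le_rfl c2l c2u d2l d2u]
  have hC2x : 0 ≤ (P*s.b1-2*s.a1) * s.c2 := by
    linarith only [key2 s.a2 s.b2 0 s.d2 a2l a2u b2l b2u le_rfl zero_le_one d2l d2u]
  have hD2x : 0 ≤ ((P+1)*s.b3-2+s.b1) * s.d2 := by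
    linarith only [key2 s.a2 s.b2 s.c2 0 a2l a2u b2l b2u c2l c2u le_rfl zero_le_one]
  have hD2y : 0 ≤ ((P+1)*s.b3-2+s.b1) * (s.d2-1) := by
    linarith only [key2 s.a2 s.b2 s.c2 1 a2l a2u b2l b2u c2l c2u zero_le_one le_rfl]
  have hB3x : 0 ≤ (2*P-4+2*s.a1+2*s.a2-(P+1)*(s.c1+s.d2)) * s.b3 := by
    linarith only [key3 0 s.c3 s.d3 le_rfl zero_le_one c3l c3u d3l d3u]
  have hB3y : 0 ≤ (2*P-4+2*s.a1+2*s.a2-(P+1)*(s.c1+s.d2)) * (s.b3-1) := by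
    linarith only [key3 1 s.c3 s.d3 zero_le_one le_rfl c3l c3u d3l d3u]
  have hC3x : 0 ≤ ((P+s.a1)*s.b2-(2-s.b1)*s.a2) * s.c3 := by
    linarith only [key3 s.b3 0 s.d3 b3l b3u le_rfl zero_le_one d3l d3u]
  have hC3y : 0 ≤ ((P+s.a1)*s.b2-(2-s.b1)*s.a2) * (s.c3-1) := by
    linarith only [key3 s.b3 1 s.d3 b3l b3u zero_le_one le_rfl d3l d3u]
  have hD3x : 0 ≤ ((P+1)*s.b1-2*s.a1) * s.d3 := by
    linarith only [key3 s.b3 s.c3 0 b3l b3u c3l c3u le_rfl zero_le_one]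
  have hD3y : 0 ≤ ((P+1)*s.b1-2*s.a1) * (s.d3-1) := by
    linarith only [key3 s.b3 s.c3 1 b3l b3u c3l c3u zero_le_one le_rfl]
  clear key1 key2 key3
  -- Step 1: b3 > 0
  have hb3pos : 0 < s.b3 := by
    rcases lt_or_eq_of_le b3l with h | h
    · exact h
    · exfalso
      have hb30 : s.b3 = 0 := h.symm
      have hd20 : s.d2 = 0 := var_zero hD2x d2l (by rw [hb30]; nlinarith only [b1u])
      have hc10 : s.c1 = 0 := var_zero hC1x c1l (by rw [hb30]; nlinarith only [b2u])
      have h1 := var_one hB3y b3u (by rw [hd20, hc10]; nlinarith only [a1l, a2l, hP2])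
      rw [hb30] at h1; norm_num at h1
  -- Step 2: b3 < 1
  have hb3lt1 : s.b3 < 1 := by
    rcases lt_or_eq_of_le b3u with h | h
    · exact h
    · exfalso
      have hd21 : s.d2 = 1 := var_one hD2y d2u (by rw [h]; nlinarith only [b1l, hP2])
      have hB3ge : 0 ≤ 2*P-4+2*s.a1+2*s.a2-(P+1)*(s.c1+s.d2) := coef_nonneg hB3x hb3pos
      have ha1pos : 0 < s.a1 := by
        rw [hd21] at hB3ge
        nlinarith only [hB3ge, mul_nonneg hp1.le c1l, a2u, hP3]
      have hA1ge : 0 ≤ -2*s.b2+2*s.c2-2*s.b3+2*s.d3-s.b2*s.c3 := coef_nonneg hA1x ha1pos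
      have hc2d3 : 1 ≤ s.c2 + s.d3 := by
        rw [h] at hA1ge
        nlinarith only [hA1ge, mul_nonneg b2l c3l, b2l]
      have hb10 : s.b1 = 0 := var_zero hB1x b1l
        (by nlinarith only [mul_nonneg hp1.le (show (0:ℝ) ≤ s.c2+s.d3-1 by linarith only [hc2d3]), hP3])
      have hd30 : s.d3 = 0 := var_zero hD3x d3l (by rw [hb10]; nlinarith only [ha1pos])
      have hc21 : s.c2 = 1 := le_antisymm c2u (by linarith only [hc2d3, hd30])
      have h2 := coef_nonneg hC2x (show (0:ℝ) < s.c2 by rw [hc21]; norm_num)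
      rw [hb10] at h2
      nlinarith only [h2, ha1pos]
  have hB3ge := coef_nonneg hB3x hb3pos
  have hB3le := coef_nonpos hB3y hb3lt1
  have hB3eq : (P+1)*(s.c1+s.d2) = 2*P-4+2*s.a1+2*s.a2 := by
    linarith only [hB3ge, hB3le]
  clear hB3ge hB3le
  -- Step 3: b1 = 0
  have hb1 : s.b1 = 0 := by
    by_contra hb1ne
    have hb1pos : 0 < s.b1 := lt_of_le_of_ne b1l (Ne.symm hb1ne)
    have hB1ge : 0 ≤ 2*P-4-(P+1)*(s.c2+s.d3) := coef_nonneg hB1x hb1pos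
    have hd3lt1 : s.d3 < 1 := by
      have h' : (P+1)*s.d3 < (P+1)*1 := by
        nlinarith only [hB1ge, mul_nonneg hp1.le c2l, hP3]
      exact lt_of_mul_lt_mul_left h' hp1.le
    have hD3le : (P+1)*s.b1 - 2*s.a1 ≤ 0 := coef_nonpos hD3y hd3lt1
    have ha1pos : 0 < s.a1 := by nlinarith only [hD3le, mul_pos hp1 hb1pos]
    have hc20 : s.c2 = 0 := var_zero hC2x c2l (by nlinarith only [hD3le, hb1pos])
    have hb1lt1 : s.b1 < 1 := by nlinarith only [hD3le, a1u, hP2, hp1]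
    have hB1le := coef_nonpos hB1y hb1lt1
    have hd3eq : (P+1)*s.d3 = 2*P-4 := by
      rw [hc20] at hB1ge hB1le; linarith only [hB1ge, hB1le]
    have hd3pos : 0 < s.d3 := by nlinarith only [hd3eq, hP2, hp1]
    have hD3eq : (P+1)*s.b1 = 2*s.a1 :=
      le_antisymm (by linarith only [hD3le]) (by linarith only [coef_nonneg hD3x hd3pos])
    have ha1A : 0 ≤ -2*s.b2+2*s.c2-2*s.b3+2*s.d3-s.b2*s.c3 := coef_nonneg hA1x ha1pos
    rw [hc20] at ha1A
    have h5 : 0 ≤ (P+1) * (-2*s.b2+2*0-2*s.b3+2*s.d3-s.b2*s.c3) := mul_nonneg hp1.le ha1A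
    have hkey : (P+1)*s.b3 + 3*s.b2 ≤ 2*P-4 := by
      nlinarith only [h5, hd3eq, mul_nonneg (show (0:ℝ) ≤ P-2 by linarith only [hP2]) b2l,
        mul_nonneg (mul_nonneg hp1.le b2l) c3l]
    have hc10 : s.c1 = 0 := var_zero hC1x c1l
      (by nlinarith only [hkey, mul_nonneg (show (0:ℝ) ≤ 1-s.a2 by linarith only [a2u]) b3l,
            b2l, hP3])
    rw [hc10] at hB3eq
    have hd2pos : 0 < s.d2 := by
      nlinarith only [hB3eq, mul_pos hp1 hb1pos, hD3eq, a2l, hP2, hp1, d2l]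
    have hD2ge : 0 ≤ (P+1)*s.b3-2+s.b1 := coef_nonneg hD2x hd2pos
    -- b2 = 0 (within b1 > 0)
    have hb20 : s.b2 = 0 := by
      by_contra hb2ne
      have hb2pos : 0 < s.b2 := lt_of_le_of_ne b2l (Ne.symm hb2ne)
      have hb2lt1 : s.b2 < 1 := by linarith only [hkey, hD2ge, hP3, b1u]
      have hB2ge := coef_nonneg hB2x hb2pos
      have hB2le := coef_nonpos hB2y hb2lt1
      have hB2eq : (P+1)*(s.c3+s.d1) = 2*P-4+2*s.a1 := by linarith only [hB2ge, hB2le]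
      have hb1ge' : 6-2*P+3*s.b2 ≤ s.b1 := by linarith only [hkey, hD2ge]
      have ha2lt1 : s.a2 < 1 := by
        nlinarith only [hB3eq, hD3eq,
          mul_nonneg hp1.le (show (0:ℝ) ≤ 1-s.d2 by linarith only [d2u]),
          mul_nonneg hp1.le (show (0:ℝ) ≤ s.b1-(6-2*P) by linarith only [hb1ge', b2l]),
          mul_pos (show (0:ℝ) < 2*P+1 by linarith only [hP2])
            (show (0:ℝ) < 3-P by linarith only [hP3])]
      have hA2le := coef_nonpos hA2y ha2lt1
      rw [hc10] at hA2le
      nlinarith only [h5, hd3eq, hB2eq, hD3eq,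
        mul_nonneg hp1.le
          (show (0:ℝ) ≤ -(2*s.d1+2*s.c3-2*s.b3-0*s.b3-s.b1*s.c3) by linarith only [hA2le]),
        mul_nonneg (mul_nonneg hp1.le b1l) (show (0:ℝ) ≤ 1-s.c3 by linarith only [c3u]),
        mul_nonneg (mul_nonneg hp1.le b2l) c3l,
        mul_pos hp1 hb1pos, mul_pos hp1 hb2pos]
    -- a2 = 0 (within b1 > 0)
    have ha20 : s.a2 = 0 := by
      rcases lt_or_eq_of_le a2l with h | h
      · exfalso
        have hd10 : s.d1 = 0 := var_zero hD1x d1l (by rw [hb20]; nlinarith only [h])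
        have hc30 : s.c3 = 0 := var_zero hC3x c3l
          (by rw [hb20];
              nlinarith only [mul_pos (show (0:ℝ) < 2-s.b1 by linarith only [b1u]) h])
        have h2 := coef_nonneg hA2x h
        rw [hd10, hc30, hc10] at h2
        nlinarith only [h2, hb3pos]
      · exact h.symm
    rw [ha20] at hB3eq
    have hd2lt1 : s.d2 < 1 := by
      have h' : (P+1)*s.d2 < (P+1)*1 := by
        nlinarith only [hB3eq, hD3eq, a1u, hP3, mul_pos hp1 hb1pos, b1u, hp1]
      exact lt_of_mul_lt_mul_left h' hp1.le
    have hD2le := coef_nonpos hD2y hd2lt1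
    have hD2eq : (P+1)*s.b3 = 2-s.b1 := by linarith only [hD2ge, hD2le]
    have hA2le := coef_nonpos hA2y (show s.a2 < 1 by rw [ha20]; norm_num)
    rw [hc10] at hA2le
    have hB2le' := coef_nonpos hB2y (show s.b2 < 1 by rw [hb20]; norm_num)
    have hb1ge : 6-2*P ≤ s.b1 := by linarith only [hkey, hD2eq, b2l]
    have h7 : 0 ≤ (P+1)*(2*s.b3+s.b1*s.c3-2*s.c3-2*s.d1) :=
      mul_nonneg hp1.le (by linarith only [hA2le])
    nlinarith only [h7, hB2le', hD3eq, hD2eq,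
      mul_nonneg (mul_nonneg hp1.le b1l) (show (0:ℝ) ≤ 1-s.c3 by linarith only [c3u]),
      mul_nonneg (show (0:ℝ) ≤ P+3 by linarith only [hP2])
        (show (0:ℝ) ≤ s.b1-(6-2*P) by linarith only [hb1ge]),
      mul_pos (show (0:ℝ) < 3-P by linarith only [hP3]) hp1]
  -- Step 4: a1 = 0
  have ha1 : s.a1 = 0 := by
    rcases lt_or_eq_of_le a1l with h | h
    · exfalso
      have hc20 : s.c2 = 0 := var_zero hC2x c2l (by rw [hb1]; nlinarith only [h])
      have hd30 : s.d3 = 0 := var_zero hD3x d3l (by rw [hb1]; nlinarith only [h])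
      have h2 := coef_nonneg hA1x h
      rw [hc20, hd30] at h2
      nlinarith only [h2, hb3pos, b2l, mul_nonneg b2l c3l]
    · exact h.symm
  -- Step 5: b2 = 0
  have hb2 : s.b2 = 0 := by
    by_contra hb2ne
    have hb2pos : 0 < s.b2 := lt_of_le_of_ne b2l (Ne.symm hb2ne)
    have hB2ge := coef_nonneg hB2x hb2pos
    rw [ha1] at hB2ge
    have hd1lt1 : s.d1 < 1 := by
      have h' : (P+1)*s.d1 < (P+1)*1 := by
        nlinarith only [hB2ge, mul_nonneg hp1.le c3l, hP3]
      exact lt_of_mul_lt_mul_left h' hp1.le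
    have hD1le := coef_nonpos hD1y hd1lt1
    have ha2pos : 0 < s.a2 := by nlinarith only [hD1le, mul_pos hp1 hb2pos]
    have hA2ge := coef_nonneg hA2x ha2pos
    rw [hb1] at hA2ge
    have h8 : 0 ≤ (P+1)*(2*s.d1+2*s.c3-2*s.b3-s.c1*s.b3-0*s.c3) := mul_nonneg hp1.le hA2ge
    have hd20 : s.d2 = 0 := by
      apply var_zero hD2x d2l
      rw [hb1]
      nlinarith only [h8, hB2ge, mul_nonneg (mul_nonneg hp1.le c1l) b3l, hP3]
    have hc1eq : (P+1)*s.c1 = 2*P-4+2*s.a2 := by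
      rw [ha1, hd20] at hB3eq; linarith only [hB3eq]
    have hc1pos : 0 < s.c1 := by nlinarith only [hc1eq, hP2, hp1, a2l]
    have hC1ge := coef_nonneg hC1x hc1pos
    have h9 : (P+1)*s.c1*s.b3 = (2*P-4+2*s.a2)*s.b3 := by
      linear_combination s.b3 * hc1eq
    have hi : s.b3*(4*P-2+2*s.a2) ≤ 2*(2*P-4) := by linarith only [h8, h9, hB2ge]
    have hj : (2-s.b2)*(4*P-2+2*s.a2) ≤ ((P+s.a2)*s.b3)*(4*P-2+2*s.a2) :=
      mul_le_mul_of_nonneg_right (by linarith only [hC1ge])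
        (by nlinarith only [a2l, hP2])
    have hk : ((P+s.a2)*s.b3)*(4*P-2+2*s.a2) ≤ (P+s.a2)*(2*(2*P-4)) := by
      have h10 := mul_le_mul_of_nonneg_left hi (show (0:ℝ) ≤ P+s.a2 by linarith only [a2l, hP2])
      nlinarith only [h10]
    have hl : (2-s.b2)*(4*P-2+2*s.a2)*(P+1) ≤ (P+s.a2)*(2*(2*P-4))*(P+1) :=
      mul_le_mul_of_nonneg_right (by linarith only [hj, hk]) hp1.le
    nlinarith only [hl, hD1le,
      mul_nonneg (show (0:ℝ) ≤ 3-P by linarith only [hP3])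
        (show (0:ℝ) ≤ P^2+P by nlinarith only [hP2]),
      mul_nonneg (show (0:ℝ) ≤ P^2-4 by nlinarith only [hP2])
        (show (0:ℝ) ≤ 1-s.a2 by linarith only [a2u]),
      mul_nonneg (show (0:ℝ) ≤ 1-s.a2 by linarith only [a2u])
        (show (0:ℝ) ≤ 1+s.a2 by linarith only [a2l]),
      mul_nonneg (show (0:ℝ) ≤ 4*P-2+2*s.a2 by nlinarith only [a2l, hP2])
        (show (0:ℝ) ≤ 2*s.a2-(P+1)*s.b2 by linarith only [hD1le])]
  -- Step 6: a2 = 0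
  have ha2 : s.a2 = 0 := by
    rcases lt_or_eq_of_le a2l with h | h
    · exfalso
      have hd10 : s.d1 = 0 := var_zero hD1x d1l (by rw [hb2]; nlinarith only [h])
      have hc30 : s.c3 = 0 := var_zero hC3x c3l
        (by rw [hb2];
            nlinarith only [mul_pos (show (0:ℝ) < 2-s.b1 by linarith only [b1u]) h])
      have h2 := coef_nonneg hA2x h
      rw [hd10, hc30, hb1] at h2
      nlinarith only [h2, hb3pos, mul_nonneg c1l b3l]
    · exact h.symm
  -- Step 7: (P+1) b3 = 2
  have hb3eq2 : (P+1)*s.b3 = 2 := by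
    rcases lt_trichotomy ((P+1)*s.b3) 2 with h | h | h
    · exfalso
      have hd20 : s.d2 = 0 := var_zero hD2x d2l (by rw [hb1]; linarith only [h])
      have hc1eq : (P+1)*s.c1 = 2*P-4 := by
        rw [ha1, ha2, hd20] at hB3eq; linarith only [hB3eq]
      have hc1pos : 0 < s.c1 := by nlinarith only [hc1eq, hP2, hp1]
      have hC1ge := coef_nonneg hC1x hc1pos
      rw [hb2, ha2] at hC1ge
      linarith only [hC1ge, h, hb3pos]
    · exact h
    · exfalso
      have hd21 : s.d2 = 1 := var_one hD2y d2u (by rw [hb1]; linarith only [h])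
      rw [ha1, ha2, hd21] at hB3eq
      nlinarith only [hB3eq, mul_nonneg hp1.le c1l, hP3]
  have hb3v : s.b3 = 2/(P+1) := by
    rw [eq_div_iff (by linarith only [hp1] : P+1 ≠ 0)]; linarith only [hb3eq2]
  have hc1 : s.c1 = 0 := var_zero hC1x c1l
    (by rw [hb2, ha2]; linarith only [hb3eq2, hb3pos])
  have hd2v : s.d2 = (2*P-4)/(P+1) := by
    rw [eq_div_iff (by linarith only [hp1] : P+1 ≠ 0)]
    rw [ha1, ha2, hc1] at hB3eq
    linarith only [hB3eq]
  have hA1le := coef_nonpos hA1y (show s.a1 < 1 by rw [ha1]; norm_num)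
  have hB1le := coef_nonpos hB1y (show s.b1 < 1 by rw [hb1]; norm_num)
  have hA2le := coef_nonpos hA2y (show s.a2 < 1 by rw [ha2]; norm_num)
  have hB2le := coef_nonpos hB2y (show s.b2 < 1 by rw [hb2]; norm_num)
  refine ⟨ha1, hb1, ha2, hb2, hb3v, hc1, hd2v, ?_, ?_, ?_, ?_⟩
  · rw [div_le_iff₀ hp1]; rw [ha1] at hB2le; linarith only [hB2le]
  · rw [le_div_iff₀ hp1]; rw [hc1, hb1] at hA2le
    linarith only [hb3eq2,
      mul_nonneg hp1.le (show (0:ℝ) ≤ s.b3-(s.c3+s.d1) by linarith only [hA2le])]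
  · rw [div_le_iff₀ hp1]; linarith only [hB1le]
  · rw [le_div_iff₀ hp1]; rw [hb2] at hA1le
    linarith only [hb3eq2,
      mul_nonneg hp1.le (show (0:ℝ) ≤ s.b3-(s.c2+s.d3) by linarith only [hA1le])]
end
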